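/- In the MHSS-derived monoid, the component μ⁽¹⁾ := {Iᵖ}⟦η⟧ : I ⊗ t → t equals the left unitor λ_t. -/

import Mathlib

open CategoryTheory Category MonoidalCategory

section

variable {V : Type*} [Category V] [MonoidalCategory V]

/-- A pointed tensorial strength for an endofunctor `H` on a monoidal category `V`:
for each monoidal-pointed object `(z, e : I ⟶ z)` and each `x`, a morphism
`θ_{(z,e),x} : z ⊗ H x ⟶ H (z ⊗ x)`, natural in both arguments, satisfying the unitor
law and the associator-compatibility (tensor) law. -/
structure PointedStrength (H : V ⥤ V) where
  θ : ∀ (z : V), (𝟙_ V ⟶ z) → ∀ x : V, z ⊗ H.obj x ⟶ H.obj (z ⊗ x)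
  /-- naturality in the pointed-object argument -/
  nat_pt : ∀ {z z' : V} (e : 𝟙_ V ⟶ z) (e' : 𝟙_ V ⟶ z') (g : z ⟶ z'), e ≫ g = e' →
    ∀ x : V, g ▷ H.obj x ≫ θ z' e' x = θ z e x ≫ H.map (g ▷ x)
  /-- naturality in the second argument -/
  nat_arg : ∀ (z : V) (e : 𝟙_ V ⟶ z) {x x' : V} (f : x ⟶ x'),
    z ◁ H.map f ≫ θ z e x' = θ z e x ≫ H.map (z ◁ f)
  /-- preservation of the unitor -/
  unit_law : ∀ x : V, θ (𝟙_ V) (𝟙 (𝟙_ V)) x ≫ H.map (λ_ x).hom = (λ_ (H.obj x)).hom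
  /-- preservation of the actor (compatibility with the associator and the tensor of
  pointed objects) -/
  tensor_law : ∀ (z : V) (e : 𝟙_ V ⟶ z) (w : V) (e' : 𝟙_ V ⟶ w) (x : V),
    θ (z ⊗ w) ((λ_ (𝟙_ V)).inv ≫ (e ⊗ₘ e')) x ≫ H.map (α_ z w x).hom =
      (α_ z w (H.obj x)).hom ≫ z ◁ θ w e' x ≫ θ z e (w ⊗ x)

/-- `(t, η, τ)` is a monoidal heterogeneous substitution system (MHSS) for `(V, H, θ)`:
for every `(z, e : I ⟶ z, f : z ⟶ t)` there is a unique `h : z ⊗ t ⟶ t` with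
`(1_z ⊗ η) · h = ρ_z · f` and `(1_z ⊗ τ) · h = θ_{(z,e),t} · H h · τ`. -/
def IsMHSS {H : V ⥤ V} (S : PointedStrength H)
    (t : V) (η : 𝟙_ V ⟶ t) (τ : H.obj t ⟶ t) : Prop :=
  ∀ (z : V) (e : 𝟙_ V ⟶ z) (f : z ⟶ t),
    ∃! h : z ⊗ t ⟶ t,
      z ◁ η ≫ h = (ρ_ z).hom ≫ f ∧
      z ◁ τ ≫ h = S.θ z e t ≫ H.map h ≫ τ

end

section

variable {V : Type*} [Category V] [MonoidalCategory V]

/-- In the MHSS-derived monoid, the component `μ⁽¹⁾ := {Iᵖ}⟦η⟧ : I ⊗ t ⟶ t` equals the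
left unitor `λ_t`: any morphism satisfying the defining equations of `{Iᵖ}⟦η⟧` (for the
pointed object `Iᵖ = (I, 1_I)`) is the left unitor. -/
theorem mhss_mu_one_eq_left_unitor {H : V ⥤ V} (S : PointedStrength H)
    (t : V) (η : 𝟙_ V ⟶ t) (τ : H.obj t ⟶ t)
    (hmhss : IsMHSS S t η τ)
    (h : 𝟙_ V ⊗ t ⟶ t)
    -- `h` is the unique morphism `{Iᵖ}⟦η⟧` determined by the MHSS property:
    (h₁ : 𝟙_ V ◁ η ≫ h = (ρ_ (𝟙_ V)).hom ≫ η)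
    (h₂ : 𝟙_ V ◁ τ ≫ h = S.θ (𝟙_ V) (𝟙 (𝟙_ V)) t ≫ H.map h ≫ τ) :
    h = (λ_ t).hom := by
  obtain ⟨u, -, huniq⟩ := hmhss (𝟙_ V) (𝟙 _) η
  have e1 := huniq h ⟨h₁, h₂⟩
  have e2 := huniq (λ_ t).hom ⟨by simp [MonoidalCategory.unitors_equal], by
    have := S.unit_law t
    calc 𝟙_ V ◁ τ ≫ (λ_ t).hom = (λ_ (H.obj t)).hom ≫ τ := by simp
    _ = (S.θ (𝟙_ V) (𝟙 (𝟙_ V)) t ≫ H.map (λ_ t).hom) ≫ τ := by rw [this]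
    _ = S.θ (𝟙_ V) (𝟙 (𝟙_ V)) t ≫ H.map (λ_ t).hom ≫ τ := by rw [Category.assoc]⟩
  rw [e1, e2]

end
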